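/- Let r, s ∈ Q and let (x_n) be an integer sequence with x_{k+2} = r*x_{k+1} - s*x_k for all k ≥ 0. Suppose X^2 - rX + s has a double rational root a1 (i.e., r^2 = 4s) and (x_n) does not satisfy any first-order recursion x_{k+1} = c*x_k. Then every prime not dividing the (numerator and denominator of the) coefficient b2 in the representation x_n = (b1 + b2*n)*a1^n divides some term x_n; in particular the set of primes dividing some term of the sequence has natural density 1. -/

import Mathlib

section Aux
variable {p : ℕ} [hp : Fact p.Prime]

omit hp in
lemma val_int_zero {z : ℤ} (h : ¬ (p : ℤ) ∣ z) : padicValRat p (z : ℚ) = 0 := by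
  rw [padicValRat.of_int]; exact_mod_cast padicValInt.eq_zero_of_not_dvd h

lemma val_int_pos {z : ℤ} (hz : z ≠ 0) (h : (p : ℤ) ∣ z) : 1 ≤ padicValRat p (z : ℚ) := by
  rw [padicValRat.of_int]
  rcases (padicValInt_dvd_iff 1 z).mp (by simpa using h) with h0 | h1
  · exact absurd h0 hz
  · exact_mod_cast h1

omit hp in
lemma val_rat_zero {q : ℚ} (hn : ¬ (p : ℤ) ∣ q.num) (hd : ¬ p ∣ q.den) :
    padicValRat p q = 0 := by
  rw [padicValRat_def, padicValInt.eq_zero_of_not_dvd hn, padicValNat.eq_zero_of_not_dvd hd]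
  simp

lemma not_dvd_of_val_zero {q : ℚ} (hq : q ≠ 0) (h : padicValRat p q = 0) :
    ¬ (p : ℤ) ∣ q.num ∧ ¬ p ∣ q.den := by
  have hcop := q.reduced
  rw [padicValRat_def] at h
  by_cases hdn : p ∣ q.den
  · exfalso
    have hnum : ¬ (p : ℤ) ∣ q.num := by
      rw [Int.natCast_dvd]
      intro h'
      have hg := Nat.dvd_gcd h' hdn
      rw [Nat.Coprime] at hcop
      rw [hcop, Nat.dvd_one] at hg
      exact hp.out.one_lt.ne' hg
    have h0 : padicValInt p q.num = 0 := padicValInt.eq_zero_of_not_dvd hnum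
    have h1 : 1 ≤ padicValNat p q.den := one_le_padicValNat_of_dvd q.den_nz hdn
    omega
  · have hd0 : padicValNat p q.den = 0 := padicValNat.eq_zero_of_not_dvd hdn
    rw [hd0] at h
    refine ⟨fun hdvd => ?_, hdn⟩
    have h1 : 1 ≤ padicValInt p q.num := by
      rcases (padicValInt_dvd_iff 1 q.num).mp (by simpa using hdvd) with h0 | h1
      · exact absurd h0 (Rat.num_ne_zero.mpr hq)
      · exact h1
    omega

end Aux

theorem inseparable_case_density_one
    (r s : ℚ) (x : ℕ → ℤ)
    (hrec : ∀ k : ℕ, ((x (k + 2) : ℚ)) = r * x (k + 1) - s * x k)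
    (hdouble : r ^ 2 = 4 * s)
    (hnofirst : ¬ ∃ c : ℚ, ∀ k : ℕ, ((x (k + 1) : ℚ)) = c * x k)
    (a1 b1 b2 : ℚ) (ha1 : a1 = r / 2)
    (hrep : ∀ n : ℕ, ((x n : ℚ)) = (b1 + b2 * n) * a1 ^ n) :
    (∀ p : ℕ, p.Prime → ¬ (p : ℤ) ∣ b2.num → ¬ (p : ℤ) ∣ (b2.den : ℤ) →
      ∃ n : ℕ, (p : ℤ) ∣ x n) ∧
    {p : ℕ | p.Prime ∧ ¬ ∃ n : ℕ, (p : ℤ) ∣ x n}.Finite := by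
  have hb2 : b2 ≠ 0 := by
    intro h
    exact hnofirst ⟨a1, fun k => by rw [hrep (k+1), hrep k, h]; push_cast; ring⟩
  have ha1ne : a1 ≠ 0 := by
    intro h
    refine hnofirst ⟨0, fun k => ?_⟩
    rw [hrep (k+1), h, zero_pow (Nat.succ_ne_zero k), mul_zero, zero_mul]
  have main : ∀ p : ℕ, p.Prime → ¬ (p : ℤ) ∣ b2.num → ¬ (p : ℤ) ∣ (b2.den : ℤ) →
      ∃ n : ℕ, (p : ℤ) ∣ x n := by
    intro p hp hnum hden
    haveI : Fact p.Prime := ⟨hp⟩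
    by_contra hcon
    push_neg at hcon
    have hx0 : ∀ n, x n ≠ 0 := fun n h => hcon n (h ▸ dvd_zero _)
    have hv0 : ∀ n, padicValRat p ((x n : ℚ)) = 0 := fun n => val_int_zero (hcon n)
    have hvb2 : padicValRat p b2 = 0 :=
      val_rat_zero hnum (fun h => hden (Int.natCast_dvd_natCast.mpr h))
    have hlin : ∀ n : ℕ, b1 + b2 * (n : ℚ) ≠ 0 := by
      intro n h
      apply hx0 n
      have := hrep n
      rw [h, zero_mul] at this
      exact_mod_cast this
    have hval : ∀ n : ℕ, padicValRat p (b1 + b2 * (n : ℚ)) + n * padicValRat p a1 = 0 := by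
      intro n
      have h1 := hv0 n
      rw [hrep n, padicValRat.mul (hlin n) (pow_ne_zero _ ha1ne),
        padicValRat.pow (q := a1)] at h1
      linarith
    have hvp : padicValRat p ((p : ℚ)) = 1 := padicValRat.self hp.one_lt
    have hppos : (0:ℚ) < p := by exact_mod_cast hp.pos
    -- valuation of b2 * p^k
    have hvpk : ∀ k : ℕ, padicValRat p (b2 * ((p ^ k : ℕ) : ℚ)) = k := by
      intro k
      have hpk : ((p ^ k : ℕ) : ℚ) ≠ 0 := Nat.cast_ne_zero.mpr (pow_ne_zero _ hp.pos.ne')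
      rw [padicValRat.mul hb2 hpk, hvb2, zero_add]
      push_cast
      rw [padicValRat.pow (q := (p:ℚ)), hvp, mul_one]
    by_cases hb1 : b1 = 0
    · -- x n = b2 n a1^n : valuations at n = 1 and n = p conflict
      have hα : padicValRat p a1 = 0 := by
        have h1 := hval 1
        simp only [hb1, zero_add, Nat.cast_one, mul_one, one_mul] at h1
        rw [hvb2] at h1
        linarith
      have hc2 := hval p
      rw [hb1, zero_add, hα, mul_zero, add_zero] at hc2
      have hc3 := hvpk 1
      rw [pow_one] at hc3
      rw [hc3] at hc2
      exact one_ne_zero hc2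
    · -- general case
      have hkey : ∀ k : ℕ, padicValRat p b1 < (k : ℤ) →
          padicValRat p b1 + (p : ℤ) ^ k * padicValRat p a1 = 0 := by
        intro k hk
        have h := hval (p ^ k)
        have hpk0 : ((p ^ k : ℕ) : ℚ) ≠ 0 :=
          Nat.cast_ne_zero.mpr (pow_ne_zero _ hp.pos.ne')
        have hb2pk : b2 * ((p ^ k : ℕ) : ℚ) ≠ 0 := mul_ne_zero hb2 hpk0
        have hne : padicValRat p b1 ≠ padicValRat p (b2 * ((p ^ k : ℕ) : ℚ)) := by
          rw [hvpk k]; exact ne_of_lt hk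
        rw [padicValRat.add_eq_min (hlin (p ^ k)) hb1 hb2pk hne, hvpk k,
          min_eq_left hk.le] at h
        push_cast at h
        linarith
      have hlt1 : padicValRat p b1 < ((padicValRat p b1).toNat + 1 : ℕ) := by
        have := Int.self_le_toNat (padicValRat p b1); push_cast; omega
      have hlt2 : padicValRat p b1 < ((padicValRat p b1).toNat + 2 : ℕ) := by
        have := Int.self_le_toNat (padicValRat p b1); push_cast; omega
      have hk1 := hkey _ hlt1
      have hk2 := hkey _ hlt2
      have hα : padicValRat p a1 = 0 := by
        have hAB : (p : ℤ) ^ ((padicValRat p b1).toNat + 1) <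
            (p : ℤ) ^ ((padicValRat p b1).toNat + 2) := by
          apply pow_lt_pow_right₀ (by exact_mod_cast hp.one_lt)
          omega
        have h3 : ((p : ℤ) ^ ((padicValRat p b1).toNat + 2)
            - (p : ℤ) ^ ((padicValRat p b1).toNat + 1)) * padicValRat p a1 = 0 := by
          ring_nf
          ring_nf at hk1 hk2
          linarith
        rcases mul_eq_zero.mp h3 with h | h
        · omega
        · exact h
      have hβ : padicValRat p b1 = 0 := by
        rw [hα, mul_zero, add_zero] at hk1; exact hk1
      obtain ⟨hb1num, hb1den⟩ := not_dvd_of_val_zero hb1 hβ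
      have hpZ : Prime (p : ℤ) := Nat.prime_iff_prime_int.mp hp
      have hD1 : ¬ (p : ℤ) ∣ (b1.den : ℤ) := fun h => hb1den (Int.natCast_dvd_natCast.mp h)
      have hB : ((b2.num * (b1.den : ℤ) : ℤ) : ZMod p) ≠ 0 := by
        rw [Ne, ZMod.intCast_zmod_eq_zero_iff_dvd]
        intro h
        rcases hpZ.dvd_mul.mp h with h | h
        exacts [hnum h, hD1 h]
      set c : ZMod p := -((b1.num * (b2.den : ℤ) : ℤ) : ZMod p) *
        (((b2.num * (b1.den : ℤ) : ℤ) : ZMod p))⁻¹ with hc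
      have hZmod : ((b1.num * (b2.den : ℤ) + b2.num * (b1.den : ℤ) * (c.val : ℤ) : ℤ)
          : ZMod p) = 0 := by
        have hcv : ((c.val : ℕ) : ZMod p) = c := ZMod.natCast_rightInverse c
        push_cast
        push_cast at hcv hB ⊢
        rw [hcv, hc]
        push_cast
        linear_combination (-(b1.num : ZMod p) * ((b2.den : ℕ) : ZMod p)) * mul_inv_cancel₀ hB
      have hdvdZ : (p : ℤ) ∣ (b1.num * (b2.den : ℤ) + b2.num * (b1.den : ℤ) * (c.val : ℤ)) :=
        (ZMod.intCast_zmod_eq_zero_iff_dvd _ p).mp hZmod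
      have hd1Q : ((b1.den : ℤ) : ℚ) ≠ 0 := by
        exact_mod_cast (Nat.cast_ne_zero (R := ℚ)).mpr b1.den_nz
      have hd2Q : ((b2.den : ℤ) : ℚ) ≠ 0 := by
        exact_mod_cast (Nat.cast_ne_zero (R := ℚ)).mpr b2.den_nz
      have hA1 : b1 * (b1.den : ℚ) = (b1.num : ℚ) := by
        have h := Rat.num_div_den b1
        rw [div_eq_iff (Nat.cast_ne_zero.mpr b1.den_nz)] at h
        exact h.symm
      have hA2 : b2 * (b2.den : ℚ) = (b2.num : ℚ) := by
        have h := Rat.num_div_den b2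
        rw [div_eq_iff (Nat.cast_ne_zero.mpr b2.den_nz)] at h
        exact h.symm
      have hsum : b1 + b2 * ((c.val : ℕ) : ℚ) =
          ((b1.num * (b2.den : ℤ) + b2.num * (b1.den : ℤ) * (c.val : ℤ) : ℤ) : ℚ)
            / (((b1.den : ℤ) * (b2.den : ℤ) : ℤ) : ℚ) := by
        rw [eq_div_iff (by push_cast at hd1Q hd2Q ⊢; exact mul_ne_zero hd1Q hd2Q)]
        push_cast
        linear_combination (b2.den : ℚ) * hA1 + (b1.den : ℚ) * ((c.val : ℕ) : ℚ) * hA2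
      have hZ0 : (b1.num * (b2.den : ℤ) + b2.num * (b1.den : ℤ) * (c.val : ℤ)) ≠ 0 := by
        intro h
        apply hlin c.val
        rw [hsum, h]
        simp
      have hDD : ¬ (p : ℤ) ∣ ((b1.den : ℤ) * (b2.den : ℤ)) := by
        intro h
        rcases hpZ.dvd_mul.mp h with h | h
        exacts [hD1 h, hden h]
      have hDD0 : ((b1.den : ℤ) * (b2.den : ℤ)) ≠ 0 :=
        mul_ne_zero (Int.natCast_ne_zero.mpr b1.den_nz) (Int.natCast_ne_zero.mpr b2.den_nz)
      have hv1 : 1 ≤ padicValRat p (b1 + b2 * ((c.val : ℕ) : ℚ)) := by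
        rw [hsum, padicValRat.div (Int.cast_ne_zero.mpr hZ0)
          (Int.cast_ne_zero.mpr hDD0)]
        have h1 := val_int_pos hZ0 hdvdZ
        have h2 := val_int_zero (p := p) hDD
        omega
      have hfin := hval c.val
      rw [hα, mul_zero, add_zero] at hfin
      omega
  refine ⟨main, ?_⟩
  have hnum0 : b2.num ≠ 0 := Rat.num_ne_zero.mpr hb2
  apply Set.Finite.subset (Set.finite_le_nat (b2.num.natAbs + b2.den))
  rintro p ⟨hp, hno⟩
  simp only [Set.mem_setOf_eq]
  rcases not_and_or.mp (fun h : ¬ (p:ℤ) ∣ b2.num ∧ ¬ (p:ℤ) ∣ (b2.den:ℤ) =>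
      hno (main p hp h.1 h.2)) with h | h
  · rw [not_not, Int.natCast_dvd] at h
    exact le_trans (Nat.le_of_dvd (Int.natAbs_pos.mpr hnum0) h) (Nat.le_add_right _ _)
  · rw [not_not, Int.natCast_dvd_natCast] at h
    exact le_trans (Nat.le_of_dvd b2.pos h) (Nat.le_add_left _ _)
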